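/- arXiv:2208.11309 — 2 statements merged into one kernel-verified Lean document; each statement's English description precedes it below -/
import Mathlib

section
/- Let Γ be a weighted congestion game fulfilling Conditions 1–2 and Γ̂ its Ψ̂-game. Then for every player u ∈ 𝒩 and every profile S, c_u(S) ≤ ĉ_u(S) ≤ d!·c_u(S). -/
/-- `hpoly k l` is the complete homogeneous symmetric polynomial of degree `k`
evaluated at the entries of the list `l`, i.e. the sum of all monomials of
total degree `k` in the elements of `l`. -/
noncomputable def hpoly : ℕ → List ℝ → ℝ
  | 0, _ => 1
  | _ + 1, [] => 0
  | k + 1, a :: l => a * hpoly k (a :: l) + hpoly (k + 1) l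
termination_by k l => (k, l.length)

/-- The `k`-order `Ψ̂`-function of a multiset `M` of reals:
`Ψ̂_k(M) = k! ·` (sum of all monomials of total degree `k` in the elements of `M`).
In particular `Ψ̂_0(M) = 1` and `Ψ̂_k(∅) = 0` for `k ≥ 1`. -/
noncomputable def psiHat (k : ℕ) (M : Multiset ℝ) : ℝ :=
  (Nat.factorial k : ℝ) * hpoly k M.toList


theorem hpoly_nonneg : ∀ (k : ℕ) (l : List ℝ), (∀ x ∈ l, (0:ℝ) ≤ x) → 0 ≤ hpoly k l
  | 0, _, _ => by rw [hpoly]; norm_num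
  | k+1, [], _ => by rw [hpoly]
  | k+1, a::l, h => by
    rw [hpoly]
    have ha := h a List.mem_cons_self
    have h1 := hpoly_nonneg k (a::l) h
    have h2 := hpoly_nonneg (k+1) l (fun x hx => h x (List.mem_cons_of_mem _ hx))
    positivity
termination_by k l => (k, l.length)

theorem hpoly_one : ∀ (l : List ℝ), hpoly 1 l = l.sum
  | [] => by rw [hpoly]; simp
  | a::l => by rw [hpoly, hpoly, hpoly_one l]; simp

theorem hpoly_le_pow : ∀ (k : ℕ) (l : List ℝ), (∀ x ∈ l, (0:ℝ) ≤ x) →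
    hpoly k l ≤ l.sum ^ k
  | 0, _, _ => by rw [hpoly]; norm_num
  | k+1, [], _ => by rw [hpoly]; simp
  | k+1, a::l, h => by
    rw [hpoly]
    have ha := h a List.mem_cons_self
    have hl : ∀ x ∈ l, (0:ℝ) ≤ x := fun x hx => h x (List.mem_cons_of_mem _ hx)
    have hs : 0 ≤ l.sum := List.sum_nonneg hl
    have h1 := hpoly_le_pow k (a::l) h
    have h2 := hpoly_le_pow (k+1) l hl
    have hsum : (a::l).sum = a + l.sum := by simp
    rw [hsum] at h1 ⊢
    have h3 : l.sum ^ (k+1) ≤ l.sum * (a + l.sum) ^ k := by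
      have : l.sum ^ k ≤ (a + l.sum) ^ k := by
        apply pow_le_pow_left₀ hs; linarith
      calc l.sum ^ (k+1) = l.sum * l.sum ^ k := by ring
        _ ≤ l.sum * (a + l.sum) ^ k := by nlinarith
    calc a * hpoly k (a::l) + hpoly (k+1) l
        ≤ a * (a + l.sum)^k + l.sum ^ (k+1) := by gcongr
      _ ≤ a * (a + l.sum)^k + l.sum * (a + l.sum)^k := by linarith
      _ = (a + l.sum)^(k+1) := by ring
termination_by k l => (k, l.length)

theorem sum_mul_hpoly_le : ∀ (k : ℕ) (l : List ℝ), (∀ x ∈ l, (0:ℝ) ≤ x) →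
    l.sum * hpoly k l ≤ (k+1 : ℝ) * hpoly (k+1) l
  | k, [], _ => by
    have h0 : hpoly (k+1) ([] : List ℝ) = 0 := by rw [hpoly]
    simp [h0]
  | 0, a::l, h => by
    rw [hpoly, hpoly_one]; simp
  | k+1, a::l, h => by
    have ha := h a List.mem_cons_self
    have hl : ∀ x ∈ l, (0:ℝ) ≤ x := fun x hx => h x (List.mem_cons_of_mem _ hx)
    have h1 := sum_mul_hpoly_le k (a::l) h
    have h2 := sum_mul_hpoly_le (k+1) l hl
    have hnn2 := hpoly_nonneg k (a::l) h
    have hsum : (a::l).sum = a + l.sum := by simp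
    have hX : hpoly (k+1) (a::l) = a * hpoly k (a::l) + hpoly (k+1) l := by rw [hpoly]
    have hY : hpoly (k+2) (a::l) = a * hpoly (k+1) (a::l) + hpoly (k+2) l := by
      rw [hpoly]
    rw [hsum] at h1 ⊢
    rw [hX] at h1
    rw [show k+1+1 = k+2 from rfl] at h2 ⊢
    rw [hY, hX]
    have t1 := mul_le_mul_of_nonneg_left h1 ha
    have t4 : 0 ≤ a * (a * hpoly k (a::l)) := mul_nonneg ha (mul_nonneg ha hnn2)
    push_cast at h2 ⊢
    nlinarith [t1, h2, t4]
termination_by k l => (k, l.length)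

theorem pow_le_factorial_mul_hpoly : ∀ (k : ℕ) (l : List ℝ), (∀ x ∈ l, (0:ℝ) ≤ x) →
    l.sum ^ k ≤ (Nat.factorial k : ℝ) * hpoly k l := by
  intro k
  induction k with
  | zero => intro l h; rw [hpoly]; norm_num
  | succ k ih =>
    intro l h
    have hs : 0 ≤ l.sum := List.sum_nonneg h
    calc l.sum ^ (k+1) = l.sum * l.sum ^ k := by ring
      _ ≤ l.sum * ((Nat.factorial k : ℝ) * hpoly k l) := by
          have := ih l h; nlinarith
      _ = (Nat.factorial k : ℝ) * (l.sum * hpoly k l) := by ring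
      _ ≤ (Nat.factorial k : ℝ) * ((k+1 : ℝ) * hpoly (k+1) l) := by
          have h1 := sum_mul_hpoly_le k l h
          have h2 : (0:ℝ) ≤ (Nat.factorial k : ℝ) := by positivity
          nlinarith
      _ = (Nat.factorial (k+1) : ℝ) * hpoly (k+1) l := by
          rw [Nat.factorial_succ]; push_cast; ring


theorem pow_le_psiHat {k d : ℕ} (hk : k ≤ d) (M : Multiset ℝ) (hM : ∀ x ∈ M, (0:ℝ) ≤ x) :
    M.sum ^ k ≤ psiHat k M ∧ psiHat k M ≤ (Nat.factorial d : ℝ) * M.sum ^ k := by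
  have hmem : ∀ x ∈ M.toList, (0:ℝ) ≤ x := fun x hx => hM x (Multiset.mem_toList.mp hx)
  have hsum : M.toList.sum = M.sum := Multiset.sum_toList M
  have hnn : 0 ≤ M.sum := by rw [← hsum]; exact List.sum_nonneg hmem
  constructor
  · rw [psiHat, ← hsum]
    exact pow_le_factorial_mul_hpoly k _ hmem
  · rw [psiHat]
    have h1 : hpoly k M.toList ≤ M.sum ^ k := by
      rw [← hsum]; exact hpoly_le_pow k _ hmem
    have h2 : (Nat.factorial k : ℝ) ≤ (Nat.factorial d : ℝ) := by
      exact_mod_cast Nat.factorial_le hk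
    have h3 : (0:ℝ) ≤ (Nat.factorial k : ℝ) := by positivity
    have h4 : 0 ≤ hpoly k M.toList := hpoly_nonneg k _ hmem
    calc (Nat.factorial k : ℝ) * hpoly k M.toList
        ≤ (Nat.factorial k : ℝ) * M.sum ^ k := by gcongr
      _ ≤ (Nat.factorial d : ℝ) * M.sum ^ k := mul_le_mul_of_nonneg_right h2 (by positivity)

/-- A weighted congestion game with `N` players, `E` resources, polynomial latency
functions of degree at most `d` (Condition 2, with coefficient-ratio bound `A`),
and players' weights in `[1, W]` (Condition 1). -/
structure WCGame (N E d : ℕ) (W A : ℝ) where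
  /-- the strategy set of each player: a set of nonempty subsets of resources -/
  strat : Fin N → Set (Finset (Fin E))
  strat_nonempty : ∀ u, (strat u).Nonempty
  strat_valid : ∀ u, ∀ s ∈ strat u, s.Nonempty
  /-- the weight of each player -/
  w : Fin N → ℝ
  /-- `a e k` is the coefficient of `x^k` in the latency function of resource `e` -/
  a : Fin E → ℕ → ℝ
  hd : 1 ≤ d
  hW : 1 ≤ W
  hw_lower : ∀ u, 1 ≤ w u
  hw_upper : ∀ u, w u ≤ W
  ha_nonneg : ∀ e k, 0 ≤ a e k
  ha_pos : ∀ e, 0 < ∑ k ∈ Finset.range (d + 1), a e k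
  hA_pos : 0 < A
  hA_bound : ∀ e e' k k', k ≤ d → k' ≤ d → 0 < a e k → a e' k' ≤ A * a e k

namespace WCGame

/-- A (pure strategy) profile: a choice of a set of resources for every player. -/
abbrev Profile (N E : ℕ) := Fin N → Finset (Fin E)

variable {N E d : ℕ} {W A : ℝ}

/-- A profile is feasible if every player uses one of her strategies. -/
def IsProfile (G : WCGame N E d W A) (S : Profile N E) : Prop :=
  ∀ u, S u ∈ G.strat u

/-- `U_e(S)`: the multiset of weights of the players using resource `e` in profile `S`. -/
noncomputable def load (G : WCGame N E d W A) (S : Profile N E) (e : Fin E) : Multiset ℝ :=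
  (Finset.univ.filter (fun u => e ∈ S u)).val.map G.w

/-- The cost `c_u(S) = w_u · ∑_{e ∈ s_u} ∑_{k=0}^d a_{e,k} · L(U_e(S))^k` of player `u`
in the original game `Γ`. -/
noncomputable def cost (G : WCGame N E d W A) (S : Profile N E) (u : Fin N) : ℝ :=
  G.w u * ∑ e ∈ S u, ∑ k ∈ Finset.range (d + 1), G.a e k * (G.load S e).sum ^ k

/-- The cost `ĉ_u(S) = w_u · ∑_{e ∈ s_u} ∑_{k=0}^d a_{e,k} · Ψ̂_k(U_e(S))` of player `u`
in the `Ψ̂`-game `Γ̂`. -/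
noncomputable def hcost (G : WCGame N E d W A) (S : Profile N E) (u : Fin N) : ℝ :=
  G.w u * ∑ e ∈ S u, ∑ k ∈ Finset.range (d + 1), G.a e k * psiHat k (G.load S e)

/-- The potential function `Φ̂(S) = ∑_e ∑_{k=0}^d (a_{e,k}/(k+1)) · Ψ̂_{k+1}(U_e(S))`
of the `Ψ̂`-game. -/
noncomputable def potHat (G : WCGame N E d W A) (S : Profile N E) : ℝ :=
  ∑ e : Fin E, ∑ k ∈ Finset.range (d + 1),
    G.a e k / ((k : ℝ) + 1) * psiHat (k + 1) (G.load S e)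

/-- The approximate potential function `Φ(S) = ∑_e Ψ_e(L(U_e(S)))` with
`Ψ_e(x) = a_{e,0}·x + ∑_{k=1}^d a_{e,k}·(x^{k+1}/(k+1) + x^k/2)`. -/
noncomputable def pot (G : WCGame N E d W A) (S : Profile N E) : ℝ :=
  ∑ e : Fin E,
    (G.a e 0 * (G.load S e).sum +
      ∑ k ∈ Finset.Icc 1 d,
        G.a e k * ((G.load S e).sum ^ (k + 1) / ((k : ℝ) + 1) + (G.load S e).sum ^ k / 2))

/-- `S` is a `ρ`-approximate pure Nash equilibrium w.r.t. the player costs `costFn`: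
no player can decrease her cost by more than a factor `ρ` by a unilateral deviation. -/
def IsApproxPNE (G : WCGame N E d W A) (costFn : Profile N E → Fin N → ℝ) (ρ : ℝ)
    (S : Profile N E) : Prop :=
  ∀ u, ∀ s' ∈ G.strat u, costFn S u ≤ ρ * costFn (Function.update S u s') u

/-- `sstar u` is a best response of player `u` to `S₋ᵤ` w.r.t. the costs `costFn`. -/
def IsBestResponses (G : WCGame N E d W A) (costFn : Profile N E → Fin N → ℝ)
    (S : Profile N E) (sstar : Fin N → Finset (Fin E)) : Prop :=
  ∀ u, sstar u ∈ G.strat u ∧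
    ∀ s ∈ G.strat u, costFn (Function.update S u (sstar u)) u ≤ costFn (Function.update S u s) u

/-- One step of Algorithm 1 (the `1/(1-ε)` best response dynamic on the `Ψ̂`-game),
moving from profile `S` to profile `S'` by letting the chosen player `ut` (a player with a
`1/(1-ε)`-move of maximum cost reduction) switch to her best response `sstar ut`. -/
def AlgOneStep (G : WCGame N E d W A) (ε : ℝ) (S S' : Profile N E) (ut : Fin N)
    (sstar : Fin N → Finset (Fin E)) : Prop :=
  G.IsBestResponses G.hcost S sstar ∧
  G.hcost S ut > (1 / (1 - ε)) * G.hcost (Function.update S ut (sstar ut)) ut ∧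
  (∀ u, G.hcost S u > (1 / (1 - ε)) * G.hcost (Function.update S u (sstar u)) u →
    G.hcost S ut - G.hcost (Function.update S ut (sstar ut)) ut ≥
      G.hcost S u - G.hcost (Function.update S u (sstar u)) u) ∧
  S' = Function.update S ut (sstar ut)

/-- One step of Algorithm 2 (the refined `ρ/(1-ε)` best response dynamic on `Γ`),
moving from profile `S` to profile `S'` by letting the chosen player `ut` (a player
maximizing `c_u(S) - ρ·c_u(s_u^*, S₋ᵤ)` among players with `ρ/(1-ε)`-moves) switch to
her best response `sstar ut`. -/
def AlgTwoStep (G : WCGame N E d W A) (ρ ε : ℝ) (S S' : Profile N E) (ut : Fin N)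
    (sstar : Fin N → Finset (Fin E)) : Prop :=
  G.IsBestResponses G.cost S sstar ∧
  G.cost S ut > (ρ / (1 - ε)) * G.cost (Function.update S ut (sstar ut)) ut ∧
  (∀ u, G.cost S u > (ρ / (1 - ε)) * G.cost (Function.update S u (sstar u)) u →
    G.cost S ut - ρ * G.cost (Function.update S ut (sstar ut)) ut ≥
      G.cost S u - ρ * G.cost (Function.update S u (sstar u)) u) ∧
  S' = Function.update S ut (sstar ut)

/-- `c_max`: the maximum cost of a player over all (feasible) profiles in `Γ`. -/
noncomputable def cMax (G : WCGame N E d W A) : ℝ :=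
  sSup {x | ∃ S u, G.IsProfile S ∧ x = G.cost S u}

/-- `ĉ_max`: the maximum cost of a player over all (feasible) profiles in `Γ̂`. -/
noncomputable def hcMax (G : WCGame N E d W A) : ℝ :=
  sSup {x | ∃ S u, G.IsProfile S ∧ x = G.hcost S u}

/-- `Φ̂_min`: the minimum of the potential `Φ̂` over all (feasible) profiles. -/
noncomputable def potHatMin (G : WCGame N E d W A) : ℝ :=
  sInf {x | ∃ S, G.IsProfile S ∧ x = G.potHat S}

/-- `a_min⁺`: the minimum positive coefficient of the latency functions. -/
noncomputable def aMinPos (G : WCGame N E d W A) : ℝ :=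
  sInf {x | 0 < x ∧ ∃ e k, k ≤ d ∧ x = G.a e k}

end WCGame

open WCGame in
/-- Lemma 3: for every player `u` and every profile `S`, `c_u(S) ≤ ĉ_u(S) ≤ d!·c_u(S)`. -/
theorem cost_le_hcost_le_factorial_mul_cost {N E d : ℕ} {W A : ℝ}
    (G : WCGame N E d W A) (S : Profile N E) (hS : G.IsProfile S) (u : Fin N) :
    G.cost S u ≤ G.hcost S u ∧ G.hcost S u ≤ (Nat.factorial d : ℝ) * G.cost S u := by
  have hM : ∀ e : Fin E, ∀ x ∈ G.load S e, (0:ℝ) ≤ x := by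
    intro e x hx
    rw [WCGame.load, Multiset.mem_map] at hx
    obtain ⟨u', _, rfl⟩ := hx
    exact le_trans zero_le_one (G.hw_lower u')
  have hw : 0 ≤ G.w u := le_trans zero_le_one (G.hw_lower u)
  constructor
  · rw [WCGame.cost, WCGame.hcost]
    apply mul_le_mul_of_nonneg_left _ hw
    refine Finset.sum_le_sum fun e _ => Finset.sum_le_sum fun k hk => ?_
    apply mul_le_mul_of_nonneg_left _ (G.ha_nonneg e k)
    exact (pow_le_psiHat (Nat.lt_succ_iff.mp (Finset.mem_range.mp hk)) _ (hM e)).1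
  · rw [WCGame.cost, WCGame.hcost]
    have key : ∑ e ∈ S u, ∑ k ∈ Finset.range (d + 1), G.a e k * psiHat k (G.load S e) ≤
        (Nat.factorial d : ℝ) *
          ∑ e ∈ S u, ∑ k ∈ Finset.range (d + 1), G.a e k * (G.load S e).sum ^ k := by
      rw [Finset.mul_sum]
      refine Finset.sum_le_sum fun e _ => ?_
      rw [Finset.mul_sum]
      refine Finset.sum_le_sum fun k hk => ?_
      have h := (pow_le_psiHat (Nat.lt_succ_iff.mp (Finset.mem_range.mp hk)) _ (hM e)).2
      calc G.a e k * psiHat k (G.load S e)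
          ≤ G.a e k * ((Nat.factorial d : ℝ) * (G.load S e).sum ^ k) :=
            mul_le_mul_of_nonneg_left h (G.ha_nonneg e k)
        _ = (Nat.factorial d : ℝ) * (G.a e k * (G.load S e).sum ^ k) := by ring
    calc G.w u * ∑ e ∈ S u, ∑ k ∈ Finset.range (d + 1), G.a e k * psiHat k (G.load S e)
        ≤ G.w u * ((Nat.factorial d : ℝ) *
            ∑ e ∈ S u, ∑ k ∈ Finset.range (d + 1), G.a e k * (G.load S e).sum ^ k) :=
          mul_le_mul_of_nonneg_left key hw
      _ = (Nat.factorial d : ℝ) *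
            (G.w u * ∑ e ∈ S u, ∑ k ∈ Finset.range (d + 1),
              G.a e k * (G.load S e).sum ^ k) := by ring
end

section
/- Let Γ be a weighted congestion game fulfilling Conditions 1–2 and Γ̂ its Ψ̂-game. Then the function Φ̂(S) = ∑_{e∈𝔼} ∑_{k=0}^d (a_{e,k}/(k+1))·Ψ̂_{k+1}(U_e(S)) is an exact potential function of Γ̂, i.e., Φ̂(s'_u, S_{−u}) − Φ̂(s_u, S_{−u}) = ĉ_u(s'_u, S_{−u}) − ĉ_u(s_u, S_{−u}) for every player u, all strategies s_u, s'_u ∈ Σ_u, and every subprofile S_{−u} of the other players' strategies. -/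
section Aux

lemma hpoly_zero (l : List ℝ) : hpoly 0 l = 1 := by simp [hpoly]

lemma hpoly_cons (k : ℕ) (a : ℝ) (l : List ℝ) :
    hpoly (k + 1) (a :: l) = a * hpoly k (a :: l) + hpoly (k + 1) l := by
  rw [hpoly]

lemma hpoly_sub (k : ℕ) (a b : ℝ) (l : List ℝ) :
    hpoly (k + 1) (a :: l) - hpoly (k + 1) (b :: l) = (a - b) * hpoly k (a :: b :: l) := by
  induction k with
  | zero => simp only [hpoly_cons, hpoly_zero]; ring
  | succ k ih =>
      rw [hpoly_cons (k+1) a l, hpoly_cons (k+1) b l, hpoly_cons k a (b :: l)]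
      linear_combination a * ih

lemma hpoly_swap (k : ℕ) (a b : ℝ) (l : List ℝ) :
    hpoly k (a :: b :: l) = hpoly k (b :: a :: l) := by
  induction k with
  | zero => simp [hpoly_zero]
  | succ k ih =>
      rw [hpoly_cons k a (b :: l), hpoly_cons k b (a :: l)]
      have h1 := hpoly_sub k a b l
      linear_combination b * ih - h1

lemma hpoly_perm {l₁ l₂ : List ℝ} (h : l₁.Perm l₂) : ∀ k, hpoly k l₁ = hpoly k l₂ := by
  induction h with
  | nil => intro k; rfl
  | cons x h ih =>
      intro k
      induction k with
      | zero => simp [hpoly_zero]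
      | succ k ihk => rw [hpoly_cons, hpoly_cons, ihk, ih]
  | swap x y l => intro k; exact hpoly_swap k y x l
  | trans h1 h2 ih1 ih2 => intro k; rw [ih1 k, ih2 k]

lemma hpoly_toList_cons (k : ℕ) (a : ℝ) (M : Multiset ℝ) :
    hpoly k (a ::ₘ M).toList = hpoly k (a :: M.toList) := by
  apply hpoly_perm
  rw [← Multiset.coe_eq_coe]
  rw [← Multiset.cons_coe, Multiset.coe_toList, Multiset.coe_toList]

lemma psiHat_cons (k : ℕ) (a : ℝ) (M : Multiset ℝ) :
    psiHat (k + 1) (a ::ₘ M) = ((k : ℝ) + 1) * a * psiHat k (a ::ₘ M) + psiHat (k + 1) M := by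
  unfold psiHat
  rw [hpoly_toList_cons, hpoly_toList_cons, hpoly_cons]
  push_cast [Nat.factorial_succ]
  ring

namespace WCGame

variable {N E d : ℕ} {W A : ℝ}

/-- the load at `e` coming from the players other than `u` -/
noncomputable def baseLoad (G : WCGame N E d W A) (S : Profile N E) (u : Fin N) (e : Fin E) :
    Multiset ℝ :=
  (Finset.univ.filter (fun v => v ≠ u ∧ e ∈ S v)).val.map G.w

lemma load_update (G : WCGame N E d W A) (S : Profile N E) (u : Fin N) (s : Finset (Fin E))
    (e : Fin E) :
    G.load (Function.update S u s) e =
      if e ∈ s then G.w u ::ₘ G.baseLoad S u e else G.baseLoad S u e := by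
  classical
  unfold WCGame.load baseLoad
  by_cases he : e ∈ s
  · simp only [he, if_true]
    have h1 : (Finset.univ.filter (fun v => e ∈ Function.update S u s v))
        = insert u (Finset.univ.filter (fun v => v ≠ u ∧ e ∈ S v)) := by
      ext v
      rcases eq_or_ne v u with rfl | h
      · simp [he]
      · simp [Function.update_of_ne h, h]
    rw [h1, Finset.insert_val_of_notMem (by simp), Multiset.map_cons]
  · simp only [he, if_false]
    have h1 : (Finset.univ.filter (fun v => e ∈ Function.update S u s v))
        = (Finset.univ.filter (fun v => v ≠ u ∧ e ∈ S v)) := by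
      ext v
      rcases eq_or_ne v u with rfl | h
      · simp [he]
      · simp [Function.update_of_ne h, h]
    rw [h1]

lemma potHat_update (G : WCGame N E d W A) (S : Profile N E) (u : Fin N)
    (s : Finset (Fin E)) :
    G.potHat (Function.update S u s) =
      (∑ e : Fin E, ∑ k ∈ Finset.range (d + 1),
        G.a e k / ((k : ℝ) + 1) * psiHat (k + 1) (G.baseLoad S u e))
      + G.hcost (Function.update S u s) u := by
  classical
  unfold WCGame.potHat WCGame.hcost
  rw [Function.update_self]
  have hsum : G.w u * ∑ e ∈ s, ∑ k ∈ Finset.range (d + 1),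
        G.a e k * psiHat k (G.load (Function.update S u s) e)
      = ∑ e : Fin E, (if e ∈ s then
          G.w u * ∑ k ∈ Finset.range (d + 1),
            G.a e k * psiHat k (G.load (Function.update S u s) e) else 0) := by
    rw [Finset.sum_ite_mem, Finset.univ_inter, Finset.mul_sum]
  rw [hsum, ← Finset.sum_add_distrib]
  apply Finset.sum_congr rfl
  intro e _
  by_cases he : e ∈ s
  · simp only [he, if_true]
    have hload : G.load (Function.update S u s) e = G.w u ::ₘ G.baseLoad S u e := by
      rw [load_update, if_pos he]
    rw [hload]
    rw [Finset.mul_sum, ← Finset.sum_add_distrib]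
    apply Finset.sum_congr rfl
    intro k _
    rw [psiHat_cons]
    have hk : ((k : ℝ) + 1) ≠ 0 := by positivity
    field_simp
    ring
  · simp only [he, if_false, add_zero]
    have hload : G.load (Function.update S u s) e = G.baseLoad S u e := by
      rw [load_update, if_neg he]
    rw [hload]

end WCGame

end Aux

open WCGame in
/-- Theorem 1 (first part): `Φ̂` is an exact potential function of the `Ψ̂`-game `Γ̂`:
for every player `u`, all strategies `s, s' ∈ Σ_u` and every subprofile `S₋ᵤ` of the other
players' strategies,
`Φ̂(s', S₋ᵤ) − Φ̂(s, S₋ᵤ) = ĉ_u(s', S₋ᵤ) − ĉ_u(s, S₋ᵤ)`. -/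
theorem potHat_is_exact_potential {N E d : ℕ} {W A : ℝ}
    (G : WCGame N E d W A) (u : Fin N) (s s' : Finset (Fin E))
    (hs : s ∈ G.strat u) (hs' : s' ∈ G.strat u)
    (S : Profile N E) (hS : ∀ v, v ≠ u → S v ∈ G.strat v) :
    G.potHat (Function.update S u s') - G.potHat (Function.update S u s) =
      G.hcost (Function.update S u s') u - G.hcost (Function.update S u s) u := by
  rw [WCGame.potHat_update, WCGame.potHat_update]
  ring
end
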